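/- arXiv:2001.06179 — 4 statements merged into one kernel-verified Lean document; each statement's English description precedes it below -/
import Mathlib

section
/- For integers m ∈ ℤ and n ∈ ℕ, the branching-Toeplitz kernels satisfy the multiplicativity identity: for all vertices σ₁, σ₂ in T_q, Σ_{τ ∈ T_q} Γ_q[e^{imθ}](σ₁, τ) · Γ_q[e^{inθ}](τ, σ₂) = Γ_q[e^{i(m+n)θ}](σ₁, σ₂), where the sum has only finitely many nonzero terms. -/
/-- Vertices of the rooted `q`-homogeneous tree, modelled as words over `Fin q`;
the root is the empty word and the children of `w` are the words `k :: w`. -/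
abbrev Vertex (q : ℕ) := List (Fin q)

/-- `σ` is an ancestor of `τ` (i.e. `σ ⪯ τ`): `τ = w ++ σ` for some word `w`. -/
def Anc {q : ℕ} (σ τ : Vertex q) : Prop := σ <:+ τ

/-- Two vertices are comparable (`(σ,τ) ∈ 𝒞`) if one is an ancestor of the other. -/
def Comp {q : ℕ} (σ τ : Vertex q) : Prop := σ <:+ τ ∨ τ <:+ σ

/-- Length of the longest common suffix, i.e. the generation of the last common
ancestor of the two vertices. -/
def lcs {q : ℕ} (σ τ : Vertex q) : ℕ :=
  ((σ.reverse.zip τ.reverse).takeWhile (fun p => decide (p.1 = p.2))).length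

/-- The graph distance on the rooted `q`-homogeneous tree. -/
def tdist {q : ℕ} (σ τ : Vertex q) : ℕ := (σ.length - lcs σ τ) + (τ.length - lcs σ τ)

instance {q : ℕ} (σ τ : Vertex q) : Decidable (Comp σ τ) :=
  inferInstanceAs (Decidable (σ <:+ τ ∨ τ <:+ σ))

/-- The branching-Toeplitz kernel `Γ_q[e^{ikθ}]` with monomial symbol:
`Γ_q[e^{ikθ}](σ₁,σ₂) = q^{-d(σ₁,σ₂)/2} · 1(|σ₁|-|σ₂| = k) · 1_𝒞(σ₁,σ₂)`. -/
noncomputable def monoKer {q : ℕ} (k : ℤ) (σ₁ σ₂ : Vertex q) : ℝ :=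
  if Comp σ₁ σ₂ ∧ (σ₁.length : ℤ) - σ₂.length = k then
    (q : ℝ) ^ (-(tdist σ₁ σ₂ : ℝ) / 2) else 0

section Aux

lemma zip_self_append {α : Type*} (l r : List α) :
    l.zip (l ++ r) = l.map (fun a => (a, a)) := by
  induction l with
  | nil => simp
  | cons a l ih => simp [ih]

lemma takeWhile_dup {α : Type*} [DecidableEq α] (l : List α) :
    (l.map (fun a => (a, a))).takeWhile (fun p => decide (p.1 = p.2)) =
      l.map (fun a => (a, a)) := by
  induction l with
  | nil => simp
  | cons a l ih => simp [ih]

lemma lcs_of_suffix {q : ℕ} {σ τ : Vertex q} (h : σ <:+ τ) : lcs σ τ = σ.length := by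
  obtain ⟨w, rfl⟩ := h
  unfold lcs
  rw [List.reverse_append, zip_self_append, takeWhile_dup, List.length_map,
    List.length_reverse]

lemma lcs_comm {q : ℕ} (σ τ : Vertex q) : lcs σ τ = lcs τ σ := by
  unfold lcs
  rw [← List.zip_swap, List.takeWhile_map, List.length_map]
  congr 1
  congr 1
  funext p
  simp [eq_comm]

lemma tdist_of_suffix {q : ℕ} {σ τ : Vertex q} (h : σ <:+ τ) :
    tdist σ τ = τ.length - σ.length := by
  have := lcs_of_suffix h
  have hl := h.length_le
  unfold tdist
  omega

lemma tdist_comm {q : ℕ} (σ τ : Vertex q) : tdist σ τ = tdist τ σ := by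
  unfold tdist; rw [lcs_comm]; omega

lemma monoKer_eq {q : ℕ} {k : ℤ} {σ τ : Vertex q} (h : Comp σ τ)
    (hk : (σ.length : ℤ) - τ.length = k) :
    monoKer k σ τ = (q : ℝ) ^ (-(k.natAbs : ℝ) / 2) := by
  rw [monoKer, if_pos ⟨h, hk⟩]
  have ht : tdist σ τ = k.natAbs := by
    rcases h with h | h
    · have h1 := tdist_of_suffix h
      have hl := h.length_le
      omega
    · have h1 := tdist_of_suffix h
      rw [tdist_comm]
      have hl := h.length_le
      omega
  rw [ht]

lemma monoKer_eq_zero {q : ℕ} {k : ℤ} {σ τ : Vertex q}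
    (h : ¬(Comp σ τ ∧ (σ.length : ℤ) - τ.length = k)) : monoKer k σ τ = 0 := if_neg h

lemma cond_of_monoKer_ne_zero {q : ℕ} {k : ℤ} {σ τ : Vertex q}
    (h : monoKer k σ τ ≠ 0) : Comp σ τ ∧ (σ.length : ℤ) - τ.length = k := by
  by_contra hc; exact h (monoKer_eq_zero hc)

lemma suffix_append_right_cancel {α : Type*} {u w s : List α}
    (h : u ++ s <:+ w ++ s) : u <:+ w := by
  obtain ⟨t, ht⟩ := h
  rw [← List.append_assoc] at ht
  exact ⟨t, List.append_cancel_right ht⟩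

lemma exists_ofFn_of_length {α : Type*} {w : List α} {n : ℕ} (h : w.length = n) :
    ∃ v : Fin n → α, List.ofFn v = w := by
  subst h; exact ⟨w.get, List.ofFn_get w⟩

lemma right_factor_struct {q : ℕ} {n : ℕ} {τ σ₂ : Vertex q}
    (h : monoKer (n : ℤ) τ σ₂ ≠ 0) :
    σ₂ <:+ τ ∧ (τ.length : ℤ) = σ₂.length + n := by
  obtain ⟨hc, hl⟩ := cond_of_monoKer_ne_zero h
  refine ⟨?_, by omega⟩
  rcases hc with h' | h'
  · have h1 := h'.length_le
    have h2 : τ.length = σ₂.length := by omega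
    rw [h'.eq_of_length h2]
  · exact h'

lemma append_suffix_inj {α : Type*} {k : ℕ} (s : List α) :
    Function.Injective (fun x : Fin k → α => List.ofFn x ++ s) := by
  intro x y h
  exact List.ofFn_injective (List.append_cancel_right h)

end Aux

/-- Multiplicativity of branching-Toeplitz kernels with monomial
symbols: for `m ∈ ℤ`, `n ∈ ℕ`, the kernel product (a finitely supported sum) of
`Γ_q[e^{imθ}]` and `Γ_q[e^{inθ}]` is `Γ_q[e^{i(m+n)θ}]`. -/
theorem monoKer_mul (q : ℕ) (hq : 2 ≤ q) (m : ℤ) (n : ℕ) (σ₁ σ₂ : Vertex q) :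
    (Function.support fun τ : Vertex q => monoKer m σ₁ τ * monoKer (n : ℤ) τ σ₂).Finite ∧
    ∑ᶠ τ : Vertex q, monoKer m σ₁ τ * monoKer (n : ℤ) τ σ₂ =
      monoKer (m + n) σ₁ σ₂ := by
  classical
  have hq0 : (0 : ℝ) < (q : ℝ) := by
    have : 0 < q := by omega
    exact_mod_cast this
  set f : Vertex q → ℝ := fun τ => monoKer m σ₁ τ * monoKer (n : ℤ) τ σ₂ with hf
  set S : Finset (Vertex q) :=
    Finset.image (fun v : Fin n → Fin q => List.ofFn v ++ σ₂) Finset.univ with hS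
  have hsupS : Function.support f ⊆ ↑S := by
    intro τ hτ
    have h2 : monoKer (n : ℤ) τ σ₂ ≠ 0 := right_ne_zero_of_mul hτ
    obtain ⟨⟨w, rfl⟩, hlen⟩ := right_factor_struct h2
    have hw : w.length = n := by
      rw [List.length_append] at hlen; omega
    obtain ⟨v, rfl⟩ := exists_ofFn_of_length hw
    exact Finset.mem_coe.2 (Finset.mem_image.2 ⟨v, Finset.mem_univ v, rfl⟩)
  refine ⟨Set.Finite.subset S.finite_toSet hsupS, ?_⟩
  by_cases hlen : (σ₁.length : ℤ) - σ₂.length = m + n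
  case neg =>
    have hz : ∀ τ, f τ = 0 := by
      intro τ
      by_cases h2 : monoKer (n : ℤ) τ σ₂ = 0
      · simp [hf, h2]
      · obtain ⟨_, hl⟩ := right_factor_struct h2
        have h1 : monoKer m σ₁ τ = 0 :=
          monoKer_eq_zero (by rintro ⟨_, hk⟩; exact hlen (by omega))
        simp [hf, h1]
    rw [finsum_eq_zero_of_forall_eq_zero hz,
      monoKer_eq_zero (by rintro ⟨_, hk⟩; exact hlen (by omega))]
  by_cases hcomp : Comp σ₁ σ₂
  case neg =>
    have hz : ∀ τ, f τ = 0 := by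
      intro τ
      by_cases h2 : monoKer (n : ℤ) τ σ₂ = 0
      · simp [hf, h2]
      by_cases h1 : monoKer m σ₁ τ = 0
      · simp [hf, h1]
      exfalso
      obtain ⟨hs2, _⟩ := right_factor_struct h2
      obtain ⟨hc1, _⟩ := cond_of_monoKer_ne_zero h1
      rcases hc1 with h | h
      · exact hcomp (List.suffix_or_suffix_of_suffix h hs2)
      · exact hcomp (Or.inr (hs2.trans h))
    rw [finsum_eq_zero_of_forall_eq_zero hz,
      monoKer_eq_zero (by rintro ⟨hc, _⟩; exact hcomp hc)]
  -- positive cases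
  rcases le_or_gt 0 m with hm | hm
  · -- m ≥ 0 : unique τ₀
    have hσ : σ₂ <:+ σ₁ := by
      rcases hcomp with h | h
      · have hl := h.length_le
        have he : σ₁.length = σ₂.length := by omega
        rw [← h.eq_of_length he]
      · exact h
    set τ₀ : Vertex q := σ₁.drop m.toNat with hτ₀
    have hτ₀s : τ₀ <:+ σ₁ := List.drop_suffix _ _
    have hτ₀l : (τ₀.length : ℤ) = σ₂.length + n := by
      have : τ₀.length = σ₁.length - m.toNat := by simp [hτ₀]
      omega
    have hsup : Function.support f ⊆ ↑({τ₀} : Finset (Vertex q)) := by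
      intro τ hτ
      have h2 : monoKer (n : ℤ) τ σ₂ ≠ 0 := right_ne_zero_of_mul hτ
      have h1 : monoKer m σ₁ τ ≠ 0 := left_ne_zero_of_mul hτ
      obtain ⟨hs2, hl2⟩ := right_factor_struct h2
      obtain ⟨hc1, hl1⟩ := cond_of_monoKer_ne_zero h1
      have hts : τ <:+ σ₁ := by
        rcases hc1 with h | h
        · have hl := h.length_le
          have he : σ₁.length = τ.length := by omega
          rw [← h.eq_of_length he]
        · exact h
      have hlτ : τ.length = τ₀.length := by omega
      have : τ = τ₀ := by
        rcases List.suffix_or_suffix_of_suffix hts hτ₀s with h | h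
        · exact h.eq_of_length hlτ
        · exact (h.eq_of_length hlτ.symm).symm
      simp [this]
    rw [finsum_eq_sum_of_support_subset f hsup, Finset.sum_singleton]
    have hσ₂τ₀ : σ₂ <:+ τ₀ := by
      rcases List.suffix_or_suffix_of_suffix hσ hτ₀s with h | h
      · exact h
      · have hl := h.length_le
        have he : τ₀.length = σ₂.length := by omega
        rw [← h.eq_of_length he]
    have e1 : monoKer m σ₁ τ₀ = (q : ℝ) ^ (-(m.natAbs : ℝ) / 2) :=
      monoKer_eq (Or.inr hτ₀s) (by omega)
    have e2 : monoKer (n : ℤ) τ₀ σ₂ = (q : ℝ) ^ (-(((n : ℤ)).natAbs : ℝ) / 2) :=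
      monoKer_eq (Or.inr hσ₂τ₀) (by omega)
    have e3 : monoKer (m + n) σ₁ σ₂ = (q : ℝ) ^ (-(((m + n : ℤ)).natAbs : ℝ) / 2) :=
      monoKer_eq (Or.inr hσ) hlen
    rw [hf]
    simp only []
    rw [e1, e2, e3, ← Real.rpow_add hq0]
    congr 1
    have h1 : (m.natAbs : ℝ) = (m : ℝ) := by
      rw [Nat.cast_natAbs]; exact_mod_cast abs_of_nonneg hm
    have h2 : ((((n : ℤ)).natAbs : ℕ) : ℝ) = (n : ℝ) := by
      simp
    have h3 : ((((m + n : ℤ)).natAbs : ℕ) : ℝ) = (m : ℝ) + n := by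
      rw [Nat.cast_natAbs]
      exact_mod_cast abs_of_nonneg (show (0:ℤ) ≤ m + (n:ℤ) by omega)
    rw [h1, h2, h3]; ring
  rcases le_or_gt 0 (m + n) with hmn | hmn
  · -- m < 0 ≤ m + n
    have hσ : σ₂ <:+ σ₁ := by
      rcases hcomp with h | h
      · have hl := h.length_le
        have he : σ₁.length = σ₂.length := by omega
        rw [← h.eq_of_length he]
      · exact h
    set k : ℕ := (-m).toNat with hk
    have hkm : (k : ℤ) = -m := by omega
    set T : Finset (Vertex q) :=
      Finset.image (fun x : Fin k → Fin q => List.ofFn x ++ σ₁) Finset.univ with hT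
    have hsup : Function.support f ⊆ ↑T := by
      intro τ hτ
      have h1 : monoKer m σ₁ τ ≠ 0 := left_ne_zero_of_mul hτ
      obtain ⟨hc1, hl1⟩ := cond_of_monoKer_ne_zero h1
      have hts : σ₁ <:+ τ := by
        rcases hc1 with h | h
        · exact h
        · exact absurd h.length_le (by omega)
      obtain ⟨y, rfl⟩ := hts
      have hy : y.length = k := by
        rw [List.length_append] at hl1; omega
      obtain ⟨x, rfl⟩ := exists_ofFn_of_length hy
      exact Finset.mem_coe.2 (Finset.mem_image.2 ⟨x, Finset.mem_univ x, rfl⟩)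
    rw [finsum_eq_sum_of_support_subset f hsup, hT,
      Finset.sum_image (fun x _ y _ h => append_suffix_inj σ₁ h)]
    have hterm : ∀ x : Fin k → Fin q,
        f (List.ofFn x ++ σ₁) =
          (q : ℝ) ^ (-(m.natAbs : ℝ) / 2) * (q : ℝ) ^ (-(((n : ℤ)).natAbs : ℝ) / 2) := by
      intro x
      have hlx : ((List.ofFn x ++ σ₁).length : ℤ) = σ₁.length + k := by
        rw [List.length_append, List.length_ofFn]; push_cast; ring
      have e1 : monoKer m σ₁ (List.ofFn x ++ σ₁) = (q : ℝ) ^ (-(m.natAbs : ℝ) / 2) :=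
        monoKer_eq (Or.inl (List.suffix_append _ _)) (by omega)
      have e2 : monoKer (n : ℤ) (List.ofFn x ++ σ₁) σ₂ =
          (q : ℝ) ^ (-(((n : ℤ)).natAbs : ℝ) / 2) :=
        monoKer_eq (Or.inr (hσ.trans (List.suffix_append _ _))) (by omega)
      rw [hf]; simp only []; rw [e1, e2]
    rw [Finset.sum_congr rfl (fun x _ => hterm x), Finset.sum_const, Finset.card_univ,
      Fintype.card_fun, Fintype.card_fin, Fintype.card_fin, nsmul_eq_mul,
      monoKer_eq hcomp hlen]
    rw [Nat.cast_pow, ← Real.rpow_natCast (q : ℝ) k, ← Real.rpow_add hq0, ← Real.rpow_add hq0]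
    congr 1
    have h1 : (m.natAbs : ℝ) = -(m : ℝ) := by
      rw [Nat.cast_natAbs]; exact_mod_cast abs_of_nonpos hm.le
    have h2 : ((((n : ℤ)).natAbs : ℕ) : ℝ) = (n : ℝ) := by
      simp
    have h3 : ((((m + n : ℤ)).natAbs : ℕ) : ℝ) = (m : ℝ) + n := by
      rw [Nat.cast_natAbs]
      exact_mod_cast abs_of_nonneg (show (0:ℤ) ≤ m + (n:ℤ) by omega)
    have h4 : ((k : ℕ) : ℝ) = -(m : ℝ) := by exact_mod_cast hkm
    rw [h1, h2, h3, h4]; ring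
  · -- m + n < 0 : σ₁ <:+ σ₂
    have hσ : σ₁ <:+ σ₂ := by
      rcases hcomp with h | h
      · exact h
      · have hl := h.length_le; exact absurd hl (by omega)
    rw [finsum_eq_sum_of_support_subset f hsupS, hS,
      Finset.sum_image (fun x _ y _ h => append_suffix_inj σ₂ h)]
    have hterm : ∀ v : Fin n → Fin q,
        f (List.ofFn v ++ σ₂) =
          (q : ℝ) ^ (-(m.natAbs : ℝ) / 2) * (q : ℝ) ^ (-(((n : ℤ)).natAbs : ℝ) / 2) := by
      intro v
      have hlx : ((List.ofFn v ++ σ₂).length : ℤ) = σ₂.length + n := by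
        rw [List.length_append, List.length_ofFn]; push_cast; ring
      have e1 : monoKer m σ₁ (List.ofFn v ++ σ₂) = (q : ℝ) ^ (-(m.natAbs : ℝ) / 2) :=
        monoKer_eq (Or.inl (hσ.trans (List.suffix_append _ _))) (by omega)
      have e2 : monoKer (n : ℤ) (List.ofFn v ++ σ₂) σ₂ =
          (q : ℝ) ^ (-(((n : ℤ)).natAbs : ℝ) / 2) :=
        monoKer_eq (Or.inr (List.suffix_append _ _)) (by omega)
      rw [hf]; simp only []; rw [e1, e2]
    rw [Finset.sum_congr rfl (fun v _ => hterm v), Finset.sum_const, Finset.card_univ,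
      Fintype.card_fun, Fintype.card_fin, Fintype.card_fin, nsmul_eq_mul,
      monoKer_eq hcomp hlen]
    rw [Nat.cast_pow, ← Real.rpow_natCast (q : ℝ) n, ← Real.rpow_add hq0, ← Real.rpow_add hq0]
    congr 1
    have h1 : (m.natAbs : ℝ) = -(m : ℝ) := by
      rw [Nat.cast_natAbs]; exact_mod_cast abs_of_nonpos hm.le
    have h2 : ((((n : ℤ)).natAbs : ℕ) : ℝ) = (n : ℝ) := by
      simp
    have h3 : ((((m + n : ℤ)).natAbs : ℕ) : ℝ) = -((m : ℝ) + n) := by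
      rw [Nat.cast_natAbs]
      exact_mod_cast abs_of_nonpos (show m + (n:ℤ) ≤ 0 by omega)
    rw [h1, h2, h3]; ring
end

section
/- Let X be an isometry on a Hilbert space H (X*X = Id) and let P ∈ ℂ[z, z̄] be a trigonometric polynomial, P(e^{iθ}) = Σ_{n=-N}^{N} a_n e^{inθ}. Define P(X) := Σ_{n=1}^{N} a_{-n} (X*)^n + a_0 Id + Σ_{n=1}^{N} a_n X^n. Then ‖P(X)‖ ≤ sup_{θ} |P(e^{iθ})|. -/
open ContinuousLinearMap in
lemma unitary_case (K : Type*) [NormedAddCommGroup K] [InnerProductSpace ℂ K] [CompleteSpace K]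
    (U : K →L[ℂ] K) (hU : U ∈ unitary (K →L[ℂ] K)) (N : ℕ) (a : ℤ → ℂ) :
    ‖∑ n ∈ Finset.Icc (-(N : ℤ)) (N : ℤ),
        a n • (if 0 ≤ n then U ^ n.toNat else (adjoint U) ^ (-n).toNat)‖ ≤
      ⨆ θ : ℝ, ‖∑ n ∈ Finset.Icc (-(N : ℤ)) (N : ℤ),
        a n * Complex.exp ((n : ℂ) * (θ : ℂ) * Complex.I)‖ := by
  have hnormal : IsStarNormal U := ⟨by rw [Commute, SemiconjBy, hU.1, hU.2]⟩
  set c : ℝ := ⨆ θ : ℝ, ‖∑ n ∈ Finset.Icc (-(N : ℤ)) (N : ℤ),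
        a n * Complex.exp ((n : ℂ) * (θ : ℂ) * Complex.I)‖ with hc_def
  have hc0 : 0 ≤ c := Real.iSup_nonneg fun θ => norm_nonneg _
  -- the symbol
  set g : ℤ → ℂ → ℂ := fun n z => a n * (if 0 ≤ n then z ^ n.toNat else (star z) ^ (-n).toNat)
    with hg
  have hgc : ∀ n : ℤ, Continuous (g n) := by
    intro n
    apply Continuous.mul continuous_const
    split
    · exact continuous_pow _
    · exact (continuous_star.pow _)
  -- cfc of the sum is our operator
  have key : cfc (fun z => ∑ n ∈ Finset.Icc (-(N : ℤ)) (N : ℤ), g n z) U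
      = ∑ n ∈ Finset.Icc (-(N : ℤ)) (N : ℤ),
        a n • (if 0 ≤ n then U ^ n.toNat else (adjoint U) ^ (-n).toNat) := by
    have : (fun z => ∑ n ∈ Finset.Icc (-(N : ℤ)) (N : ℤ), g n z)
        = ∑ n ∈ Finset.Icc (-(N : ℤ)) (N : ℤ), g n := by ext z; simp
    rw [this, cfc_sum _ U _ (fun i _ => (hgc i).continuousOn)]
    refine Finset.sum_congr rfl fun n _ => ?_
    rw [hg]
    simp only
    rw [cfc_const_mul _ _ U (by split <;> fun_prop)]
    congr 1
    split
    · exact cfc_pow_id U _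
    · rw [cfc_pow (star · : ℂ → ℂ) _ (a := U) (ha := hnormal),
        cfc_star_id (ha := hnormal), star_eq_adjoint]
  rw [← key]
  refine norm_cfc_le hc0 fun z hz => ?_
  have hz1 : ‖z‖ = 1 := by
    simpa using spectrum.subset_circle_of_unitary hU hz
  have hexp : Complex.exp ((z.arg : ℂ) * Complex.I) = z := by
    have := Complex.norm_mul_exp_arg_mul_I z
    rwa [hz1, Complex.ofReal_one, one_mul] at this
  calc ‖∑ n ∈ Finset.Icc (-(N : ℤ)) (N : ℤ), g n z‖
      = ‖∑ n ∈ Finset.Icc (-(N : ℤ)) (N : ℤ),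
          a n * Complex.exp ((n : ℂ) * (z.arg : ℂ) * Complex.I)‖ := by
        congr 1
        refine Finset.sum_congr rfl fun n _ => ?_
        rw [hg]; simp only
        congr 1
        rcases le_or_gt 0 n with h | h
        · rw [if_pos h]
          conv_lhs => rw [← hexp]
          rw [← Complex.exp_nat_mul]
          congr 1
          have hcast : ((n.toNat : ℕ) : ℂ) = (n : ℂ) := by
            exact_mod_cast congrArg (Int.cast : ℤ → ℂ) (Int.toNat_of_nonneg h)
          rw [hcast]; ring
        · have h' : (0:ℤ) < -n := by omega
          have hsz : star z = Complex.exp (-((z.arg:ℂ) * Complex.I)) := by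
            conv_lhs => rw [← hexp]
            rw [Complex.star_def, ← Complex.exp_conj]
            congr 1
            simp [Complex.conj_ofReal]
          rw [if_neg (not_le.mpr h), hsz, ← Complex.exp_nat_mul]
          congr 1
          have hcast : (((-n).toNat : ℕ) : ℂ) = ((-n : ℤ) : ℂ) := by
            exact_mod_cast congrArg (Int.cast : ℤ → ℂ) (Int.toNat_of_nonneg h'.le)
          rw [hcast]; push_cast; ring
    _ ≤ c := by
        refine le_ciSup_of_le ?_ z.arg le_rfl
        refine ⟨∑ n ∈ Finset.Icc (-(N : ℤ)) (N : ℤ), ‖a n‖, ?_⟩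
        rintro x ⟨θ, rfl⟩
        refine (norm_sum_le _ _).trans (Finset.sum_le_sum fun n _ => ?_)
        rw [norm_mul]
        have : ‖Complex.exp ((n : ℂ) * (θ : ℂ) * Complex.I)‖ = 1 := by
          rw [(by push_cast; ring : (n : ℂ) * (θ : ℂ) * Complex.I = ((n * θ : ℝ) : ℂ) * Complex.I)]
          exact Complex.norm_exp_ofReal_mul_I _
        rw [this, mul_one]
open ContinuousLinearMap in
/-- Let `X` be an isometry on a Hilbert space `H`
(`X*X = Id`) and `P(e^{iθ}) = Σ_{|n| ≤ N} a_n e^{inθ}` a trigonometric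
polynomial.  With `P(X) := Σ_{n=1}^N a_{-n} (X*)^n + a_0·Id + Σ_{n=1}^N a_n X^n`,
one has `‖P(X)‖ ≤ sup_θ |P(e^{iθ})|`. -/
theorem trig_poly_isometry_norm_bound
    (H : Type*) [NormedAddCommGroup H] [InnerProductSpace ℂ H] [CompleteSpace H]
    (X : H →L[ℂ] H) (hX : (adjoint X).comp X = 1) (N : ℕ) (a : ℤ → ℂ) :
    ‖∑ n ∈ Finset.Icc (-(N : ℤ)) (N : ℤ),
        a n • (if 0 ≤ n then X ^ n.toNat else (adjoint X) ^ (-n).toNat)‖ ≤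
      ⨆ θ : ℝ, ‖∑ n ∈ Finset.Icc (-(N : ℤ)) (N : ℤ),
        a n * Complex.exp ((n : ℂ) * (θ : ℂ) * Complex.I)‖ := by
  classical
  set K := WithLp 2 (H × H) with hK
  let e : K ≃L[ℂ] H × H := WithLp.prodContinuousLinearEquiv 2 ℂ H H
  let D : H →L[ℂ] H := 1 - X ∘L adjoint X
  let A : H × H →L[ℂ] H × H :=
    ((X ∘L fst ℂ H H) + (D ∘L snd ℂ H H)).prod (-((adjoint X) ∘L snd ℂ H H))
  let B : H × H →L[ℂ] H × H :=
    ((adjoint X) ∘L fst ℂ H H).prod ((D ∘L fst ℂ H H) - (X ∘L snd ℂ H H))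
  let U : K →L[ℂ] K := (e.symm : H × H →L[ℂ] K) ∘L A ∘L (e : K →L[ℂ] H × H)
  let W : K →L[ℂ] K := (e.symm : H × H →L[ℂ] K) ∘L B ∘L (e : K →L[ℂ] H × H)
  have hX' : ∀ x, adjoint X (X x) = x := fun x => by
    have := ContinuousLinearMap.ext_iff.mp hX x
    simpa using this
  have hDX : ∀ x, D (X x) = 0 := fun x => by simp [D, hX']
  have hXD : ∀ x, adjoint X (D x) = 0 := fun x => by simp [D, hX']
  have hDD : ∀ x, D (D x) = D x := fun x => by simp [D, hX']
  have hBA : B ∘L A = 1 := by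
    refine ContinuousLinearMap.ext fun v => Prod.ext ?_ ?_
    · simp [A, B, hX', hXD]
    · simp [A, B, hDX, hDD, hX', D]
  have hAB : A ∘L B = 1 := by
    refine ContinuousLinearMap.ext fun v => Prod.ext ?_ ?_
    · simp [A, B, hX', hXD, hDX, hDD, D]
    · simp [A, B, hX', hXD, hDX, hDD, D]
  have hWU : W ∘L U = 1 := by
    ext v
    simp only [W, U, comp_apply, ContinuousLinearEquiv.coe_coe,
      ContinuousLinearEquiv.apply_symm_apply, one_apply]
    rw [← ContinuousLinearMap.comp_apply, hBA]
    simp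
  have hUW : U ∘L W = 1 := by
    ext v
    simp only [W, U, comp_apply, ContinuousLinearEquiv.coe_coe,
      ContinuousLinearEquiv.apply_symm_apply, one_apply]
    rw [← ContinuousLinearMap.comp_apply, hAB]
    simp
  have hDsym : ∀ (x y : H), (inner ℂ (D x) y : ℂ) = inner ℂ x (D y) := fun x y => by
    simp only [D, sub_apply, one_apply, comp_apply, inner_sub_left, inner_sub_right]
    congr 1
    rw [← adjoint_inner_right, adjoint_inner_left]
  have hadj : W = adjoint U := by
    rw [eq_adjoint_iff]
    intro v w
    have hUw1 : (U w).fst = X w.fst + D w.snd := rfl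
    have hUw2 : (U w).snd = -(adjoint X w.snd) := rfl
    have hWv1 : (W v).fst = adjoint X v.fst := rfl
    have hWv2 : (W v).snd = D v.fst - X v.snd := rfl
    rw [WithLp.prod_inner_apply, WithLp.prod_inner_apply]
    simp only [WithLp.ofLp_fst, WithLp.ofLp_snd]
    rw [hUw1, hUw2, hWv1, hWv2]
    rw [inner_sub_left, inner_add_right, inner_neg_right, adjoint_inner_left,
      adjoint_inner_right, hDsym]
    ring
  have hUuni : U ∈ unitary (K →L[ℂ] K) := by
    constructor
    · rw [star_eq_adjoint, ← hadj, mul_def, hWU]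
    · rw [star_eq_adjoint, ← hadj, mul_def, hUW]
  -- embedding
  let ι : H →L[ℂ] K := (e.symm : H × H →L[ℂ] K) ∘L inl ℂ H H
  have hι1 : ∀ x : H, (ι x).fst = x := fun x => rfl
  have hι2 : ∀ x : H, (ι x).snd = 0 := fun x => rfl
  have hι_inner : ∀ x y : H, (inner ℂ (ι x) (ι y) : ℂ) = inner ℂ x y := fun x y => by
    rw [WithLp.prod_inner_apply]
    simp only [WithLp.ofLp_fst, WithLp.ofLp_snd]
    rw [hι1, hι1, hι2, hι2]
    simp
  have hι_norm : ∀ x : H, ‖ι x‖ = ‖x‖ := fun x => by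
    rw [norm_eq_sqrt_re_inner (𝕜 := ℂ) (ι x), norm_eq_sqrt_re_inner (𝕜 := ℂ) x, hι_inner]
  have hUι : ∀ x, U (ι x) = ι (X x) := fun x => by
    apply (WithLp.prodContinuousLinearEquiv 2 ℂ H H).injective
    refine Prod.ext ?_ ?_
    · show (U (ι x)).fst = (ι (X x)).fst
      show X (ι x).fst + D (ι x).snd = X x
      rw [hι1, hι2]; simp
    · show (U (ι x)).snd = (ι (X x)).snd
      show -(adjoint X (ι x).snd) = 0
      rw [hι2]; simp
  have hpow : ∀ (k : ℕ) (x : H), (U ^ k) (ι x) = ι ((X ^ k) x) := by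
    intro k
    induction k with
    | zero => intro x; simp
    | succ k ih =>
      intro x
      rw [pow_succ, pow_succ, mul_apply_eq_comp, mul_apply_eq_comp, hUι, ih]
  have hterm : ∀ (n : ℤ) (x y : H),
      (inner ℂ ((if 0 ≤ n then U ^ n.toNat else adjoint U ^ (-n).toNat) (ι x)) (ι y) : ℂ)
        = inner ℂ ((if 0 ≤ n then X ^ n.toNat else adjoint X ^ (-n).toNat) x) y := by
    intro n x y
    rcases le_or_gt 0 n with h | h
    · rw [if_pos h, if_pos h, hpow, hι_inner]
    · rw [if_neg (not_le.mpr h), if_neg (not_le.mpr h)]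
      have h1 : adjoint U ^ (-n).toNat = adjoint (U ^ (-n).toNat) := by
        rw [← star_eq_adjoint, ← star_eq_adjoint, ← star_pow]
      have h2 : adjoint X ^ (-n).toNat = adjoint (X ^ (-n).toNat) := by
        rw [← star_eq_adjoint, ← star_eq_adjoint, ← star_pow]
      rw [h1, h2, adjoint_inner_left, adjoint_inner_left, hpow, hι_inner]
  set PX := ∑ n ∈ Finset.Icc (-(N : ℤ)) (N : ℤ),
      a n • (if 0 ≤ n then X ^ n.toNat else (adjoint X) ^ (-n).toNat) with hPX
  set PU := ∑ n ∈ Finset.Icc (-(N : ℤ)) (N : ℤ),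
      a n • (if 0 ≤ n then U ^ n.toNat else (adjoint U) ^ (-n).toNat) with hPU
  have hcomp : ∀ x y : H, (inner ℂ (PU (ι x)) (ι y) : ℂ) = inner ℂ (PX x) y := by
    intro x y
    rw [hPU, hPX, sum_apply, sum_apply, sum_inner, sum_inner]
    refine Finset.sum_congr rfl fun n _ => ?_
    rw [smul_apply, smul_apply, inner_smul_left, inner_smul_left, hterm]
  have hb : ∀ x : H, ‖PX x‖ ≤ ‖PU‖ * ‖x‖ := by
    intro x
    have h1 : ‖(inner ℂ (PX x) (PX x) : ℂ)‖ = ‖PX x‖ ^ 2 := by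
      rw [inner_self_eq_norm_sq_to_K (𝕜 := ℂ)]
      simp [Real.norm_of_nonneg (norm_nonneg _)]
    have h2 : ‖(inner ℂ (PX x) (PX x) : ℂ)‖ ≤ (‖PU‖ * ‖x‖) * ‖PX x‖ := by
      rw [← hcomp]
      calc ‖(inner ℂ (PU (ι x)) (ι (PX x)) : ℂ)‖
          ≤ ‖PU (ι x)‖ * ‖ι (PX x)‖ := norm_inner_le_norm _ _
        _ ≤ (‖PU‖ * ‖ι x‖) * ‖ι (PX x)‖ := by
            gcongr
            exact le_opNorm _ _
        _ = (‖PU‖ * ‖x‖) * ‖PX x‖ := by rw [hι_norm, hι_norm]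
    have h3 : ‖PX x‖ ^ 2 ≤ (‖PU‖ * ‖x‖) * ‖PX x‖ := h1 ▸ h2
    rcases eq_or_lt_of_le (norm_nonneg (PX x)) with h0 | h0
    · rw [← h0]
      exact mul_nonneg (norm_nonneg _) (norm_nonneg _)
    · have h4 : ‖PX x‖ * ‖PX x‖ ≤ (‖PU‖ * ‖x‖) * ‖PX x‖ := by rwa [pow_two] at h3
      exact le_of_mul_le_mul_right h4 h0
  have hfin : ‖PX‖ ≤ ‖PU‖ := opNorm_le_bound _ (norm_nonneg _) hb
  exact hfin.trans (unitary_case K U hUuni N a)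
end

section
/- For any formal Fourier series f on the free semigroup F_q^+ and any unit vector a ∈ ℂ^q, the kernel composition identity Γ_a[f] Γ_a[e^{iθ}] = Γ_a[e^{iθ} f] holds, where (Γ_a[f] Γ_a[e^{iθ}])(u, v) := Σ_{w ∈ F_q^+} Γ_a[f](u, w) Γ_a[e^{iθ}](w, v) (a finite sum for each (u,v)), and e^{iθ}f has Fourier coefficients \hat{(e^{iθ}f)}(n) = \hat{f}(n-1). -/
def wprod {q : ℕ} (a : Fin q → ℂ) (w : List (Fin q)) : ℂ := (w.map a).prod

def freeKer {q : ℕ} (a : Fin q → ℂ) (f : ℤ → ℂ) (u v : List (Fin q)) : ℂ :=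
  if v <:+ u then
    f ((u.length : ℤ) - v.length) * wprod a (u.take (u.length - v.length))
  else if u <:+ v then
    f ((u.length : ℤ) - v.length) * starRingEnd ℂ (wprod a (v.take (v.length - u.length)))
  else 0

lemma wprod_append {q : ℕ} (a : Fin q → ℂ) (x y : List (Fin q)) :
    wprod a (x ++ y) = wprod a x * wprod a y := by simp [wprod]

lemma gker_cons {q : ℕ} (a : Fin q → ℂ) (i : Fin q) (v : List (Fin q)) :
    freeKer a (fun k => if k = 1 then 1 else 0) (i :: v) v = a i := by
  have h : v <:+ i :: v := List.suffix_cons i v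
  have hl : (((i :: v).length : ℤ)) - (v.length : ℤ) = 1 := by simp
  rw [freeKer, if_pos h, hl]
  simp [wprod]

lemma gker_zero {q : ℕ} (a : Fin q → ℂ) (w v : List (Fin q)) (h : ∀ i, w ≠ i :: v) :
    freeKer a (fun k => if k = 1 then 1 else 0) w v = 0 := by
  unfold freeKer
  split_ifs with h1 h2
  · have hne : ((w.length : ℤ) - v.length) ≠ 1 := by
      intro hlen
      obtain ⟨t, ht⟩ := h1
      have htl : t.length = 1 := by
        have := congrArg List.length ht
        simp at this; omega
      obtain ⟨i, rfl⟩ := List.length_eq_one_iff.mp htl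
      exact h i ht.symm
    simp [hne]
  · have hne : ((w.length : ℤ) - v.length) ≠ 1 := by
      have := h2.length_le; omega
    simp [hne]
  · rfl

/-- For any formal Fourier series `f` and unit vector
`a ∈ ℂ^q`, one has the kernel composition identity
`Γ_a[f] Γ_a[e^{iθ}] = Γ_a[e^{iθ} f]`, where the composition at `(u,v)` is the
(finitely supported) sum over all words `w`, and `e^{iθ}f` has coefficients
`\hat{f}(· - 1)`. -/
theorem freeKer_comp_shift (q : ℕ) (hq : 2 ≤ q) (a : Fin q → ℂ)
    (ha : ∑ k, ‖a k‖ ^ 2 = 1) (f : ℤ → ℂ) (u v : List (Fin q)) :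
    (Function.support fun w : List (Fin q) =>
      freeKer a f u w * freeKer a (fun k => if k = 1 then 1 else 0) w v).Finite ∧
    ∑ᶠ w : List (Fin q),
        freeKer a f u w * freeKer a (fun k => if k = 1 then 1 else 0) w v =
      freeKer a (fun n => f (n - 1)) u v := by
  classical
  have hsum1 : ∑ i, (starRingEnd ℂ) (a i) * a i = 1 := by
    have h1 : ∀ i, (starRingEnd ℂ) (a i) * a i = ((‖a i‖ ^ 2 : ℝ) : ℂ) := by
      intro i
      rw [mul_comm, Complex.mul_conj, Complex.normSq_eq_norm_sq]
    rw [Finset.sum_congr rfl fun i _ => h1 i, ← Complex.ofReal_sum, ha, Complex.ofReal_one]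
  have hsupp : (Function.support fun w : List (Fin q) =>
      freeKer a f u w * freeKer a (fun k => if k = 1 then 1 else 0) w v) ⊆
      ↑(Finset.image (fun i : Fin q => i :: v) Finset.univ) := by
    intro w hw
    simp only [Function.mem_support] at hw
    by_contra hmem
    have hno : ∀ i, w ≠ i :: v := by
      intro i hi
      exact hmem (by simp [hi])
    rw [gker_zero a w v hno, mul_zero] at hw
    exact hw rfl
  refine ⟨Set.Finite.subset (Finset.finite_toSet _) hsupp, ?_⟩
  rw [finsum_eq_sum_of_support_subset _ hsupp,
    Finset.sum_image (fun i _ j _ h => by simpa using h)]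
  simp only [gker_cons]
  -- Goal: ∑ i, freeKer a f u (i :: v) * a i = freeKer a (fun n => f (n - 1)) u v
  by_cases h1 : v <:+ u
  · by_cases h2 : u = v
    · subst h2
      have hterm : ∀ i : Fin q, freeKer a f u (i :: u) = f (-1) * (starRingEnd ℂ) (a i) := by
        intro i
        have hns : ¬ ((i :: u) <:+ u) := by
          intro h; have := h.length_le; simp at this
        have hs : u <:+ i :: u := List.suffix_cons i u
        rw [freeKer, if_neg hns, if_pos hs]
        have hl : ((u.length : ℤ)) - ((i :: u).length : ℤ) = -1 := by simp
        have ht : (i :: u).take ((i :: u).length - u.length) = [i] := by simp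
        rw [hl, ht]
        simp [wprod]
      have hrhs : freeKer a (fun n => f (n - 1)) u u = f (-1) := by
        rw [freeKer, if_pos (List.suffix_refl u)]
        simp [wprod]
      rw [hrhs]
      calc ∑ i, freeKer a f u (i :: u) * a i
          = f (-1) * ∑ i, (starRingEnd ℂ) (a i) * a i := by
            rw [Finset.mul_sum]
            exact Finset.sum_congr rfl fun i _ => by rw [hterm i]; ring
        _ = f (-1) := by rw [hsum1, mul_one]
    · obtain ⟨w, hw⟩ := h1
      have hwne : w ≠ [] := by rintro rfl; exact h2 hw.symm
      obtain ⟨d, i0, rfl⟩ := (List.eq_nil_or_concat w).resolve_left hwne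
      rw [List.concat_eq_append] at hw
      have hu : u = d ++ (i0 :: v) := by rw [← hw]; simp
      have hul : u.length = d.length + 1 + v.length := by rw [hu]; simp; omega
      have hkey : ∀ i : Fin q, i ≠ i0 → freeKer a f u (i :: v) * a i = 0 := by
        intro i hi
        have hz : freeKer a f u (i :: v) = 0 := by
          rw [freeKer, if_neg, if_neg]
          · intro hsuf
            have hl := hsuf.length_le
            simp only [List.length_cons] at hl
            have hd : d = [] := List.length_eq_zero_iff.mp (by omega)
            subst hd
            simp only [List.nil_append] at hu
            have hueq : u = i :: v := hsuf.eq_of_length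
              (by simp only [List.length_cons, hul, List.length_nil]; omega)
            rw [hu] at hueq
            injection hueq with h _
            exact hi h.symm
          · intro hsuf
            obtain ⟨t, ht⟩ := hsuf
            rw [hu] at ht
            have h2'' := (List.append_inj' ht (by simp)).2
            injection h2'' with h _
            exact hi h
        rw [hz, zero_mul]
      rw [Fintype.sum_eq_single i0 hkey]
      have hs0 : (i0 :: v) <:+ u := ⟨d, hu.symm⟩
      have hlhs : freeKer a f u (i0 :: v) =
          f ((u.length : ℤ) - v.length - 1) * wprod a d := by
        rw [freeKer, if_pos hs0]
        have h1' : ((u.length : ℤ)) - ((i0 :: v).length : ℤ) = (u.length : ℤ) - v.length - 1 := by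
          simp; ring
        have h2' : u.take (u.length - (i0 :: v).length) = d := by
          have hln : u.length - (i0 :: v).length = d.length := by
            simp only [List.length_cons, hul]; omega
          rw [hln, hu, List.take_left]
        rw [h1', h2']
      have hrhs : freeKer a (fun n => f (n - 1)) u v =
          f ((u.length : ℤ) - v.length - 1) * (wprod a d * a i0) := by
        rw [freeKer, if_pos ⟨d ++ [i0], by rw [hu]; simp⟩]
        have h2' : u.take (u.length - v.length) = d ++ [i0] := by
          have hln : u.length - v.length = (d ++ [i0]).length := by
            simp [hul]
          rw [hln, ← hw, List.take_left]
        rw [h2', wprod_append]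
        simp [wprod]
      rw [hlhs, hrhs]
      ring
  · by_cases h3 : u <:+ v
    · obtain ⟨w, hw⟩ := h3
      have hlen : u.length ≤ v.length := by
        have := congrArg List.length hw; simp at this; omega
      have hterm : ∀ i : Fin q, freeKer a f u (i :: v) =
          f ((u.length : ℤ) - v.length - 1) *
            ((starRingEnd ℂ) (a i) * (starRingEnd ℂ) (wprod a w)) := by
        intro i
        have hns : ¬ ((i :: v) <:+ u) := by
          intro h
          have hle := h.length_le
          simp only [List.length_cons] at hle
          have huv : u = v := (List.IsSuffix.eq_of_length ⟨w, hw⟩ (by omega))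
          exact h1 (huv ▸ List.suffix_refl u)
        have hs : u <:+ (i :: v) := ⟨i :: w, by rw [← hw]; rfl⟩
        rw [freeKer, if_neg hns, if_pos hs]
        have hwl : w.length = v.length - u.length := by
          have := congrArg List.length hw; simp at this; omega
        have h1' : ((u.length : ℤ)) - ((i :: v).length : ℤ) =
            (u.length : ℤ) - v.length - 1 := by simp; ring
        have h2' : (i :: v).take ((i :: v).length - u.length) = i :: w := by
          simp only [List.length_cons]
          have : v.length + 1 - u.length = w.length + 1 := by omega
          rw [this, List.take_succ_cons]
          congr 1
          rw [← hw, List.take_left]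
        rw [h1', h2']
        have : wprod a (i :: w) = a i * wprod a w := by simp [wprod]
        rw [this, map_mul]
      have hrhs : freeKer a (fun n => f (n - 1)) u v =
          f ((u.length : ℤ) - v.length - 1) * (starRingEnd ℂ) (wprod a w) := by
        rw [freeKer, if_neg h1, if_pos ⟨w, hw⟩]
        have h2' : v.take (v.length - u.length) = w := by
          have : v.length - u.length = w.length := by
            have := congrArg List.length hw; simp at this; omega
          rw [this, ← hw, List.take_left]
        rw [h2']
      rw [hrhs]
      calc ∑ i, freeKer a f u (i :: v) * a i
          = (f ((u.length : ℤ) - v.length - 1) * (starRingEnd ℂ) (wprod a w)) *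
              ∑ i, (starRingEnd ℂ) (a i) * a i := by
            rw [Finset.mul_sum]
            exact Finset.sum_congr rfl fun i _ => by rw [hterm i]; ring
        _ = _ := by rw [hsum1, mul_one]
    · have hterm : ∀ i : Fin q, freeKer a f u (i :: v) = 0 := by
        intro i
        rw [freeKer, if_neg, if_neg]
        · intro hsuf
          obtain ⟨t, ht⟩ := hsuf
          cases t with
          | nil =>
            simp only [List.nil_append] at ht
            exact h1 ⟨[i], by simp [ht]⟩
          | cons j t' =>
            apply h3
            simp only [List.cons_append, List.cons.injEq] at ht
            exact ⟨t', ht.2⟩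
        · intro hsuf
          exact h1 ((List.suffix_cons i v).trans hsuf)
      have hrhs : freeKer a (fun n => f (n - 1)) u v = 0 := by
        rw [freeKer, if_neg h1, if_neg h3]
      rw [hrhs]
      simp [hterm]
end

section
/- Let μ be a finite positive measure on the circle 𝕋. Then for every integer q ≥ 2, the branching-Toeplitz kernel Γ_q[μ](σ₁, σ₂) = q^{-d(σ₁,σ₂)/2} · \hat{μ}(|σ₁| - |σ₂|) · 1_𝒞(σ₁, σ₂) is positive definite on T_q, where \hat{μ}(n) = ∫_𝕋 e^{-inθ} dμ(θ). (Sufficiency direction of the positive definiteness criterion for branching-Toeplitz kernels.) -/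
open MeasureTheory
open scoped ComplexOrder

/-! ### Auxiliary lemmas -/

private lemma takeWhile_zip_left {α : Type*} [DecidableEq α] (l t : List α) :
    ((l.zip (l ++ t)).takeWhile (fun p => decide (p.1 = p.2))).length = l.length := by
  induction l with
  | nil => simp
  | cons a l ih => simpa using ih

private lemma takeWhile_zip_right {α : Type*} [DecidableEq α] (l t : List α) :
    (((l ++ t).zip l).takeWhile (fun p => decide (p.1 = p.2))).length = l.length := by
  induction l with
  | nil => simp
  | cons a l ih => simpa using ih

private lemma lcs_of_suffix_left {q : ℕ} (σ τ : Vertex q) (h : σ <:+ τ) :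
    lcs σ τ = σ.length := by
  obtain ⟨u, rfl⟩ := h
  unfold lcs
  rw [List.reverse_append, takeWhile_zip_left, List.length_reverse]

private lemma lcs_of_suffix_right {q : ℕ} (σ τ : Vertex q) (h : τ <:+ σ) :
    lcs σ τ = τ.length := by
  obtain ⟨u, rfl⟩ := h
  unfold lcs
  rw [List.reverse_append, takeWhile_zip_right, List.length_reverse]

private lemma tdist_of_suffix_left {q : ℕ} (σ τ : Vertex q) (h : σ <:+ τ) :
    tdist σ τ = τ.length - σ.length := by
  unfold tdist
  rw [lcs_of_suffix_left σ τ h, Nat.sub_self, zero_add]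

private lemma tdist_of_suffix_right {q : ℕ} (σ τ : Vertex q) (h : τ <:+ σ) :
    tdist σ τ = σ.length - τ.length := by
  unfold tdist
  rw [lcs_of_suffix_right σ τ h, Nat.sub_self, add_zero]

private lemma card_suffix_filter (q N : ℕ) (τ : Vertex q) (hτ : τ.length ≤ N) :
    (Finset.univ.filter (fun w : List.Vector (Fin q) N => τ <:+ w.toList)).card
      = q ^ (N - τ.length) := by
  classical
  have : (Finset.univ.filter
        (fun w : List.Vector (Fin q) N => τ <:+ w.toList)).card
      = (Finset.univ : Finset (List.Vector (Fin q) (N - τ.length))).card := by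
    refine Finset.card_bij'
      (fun w _ => ⟨w.toList.take (N - τ.length), by
        simp [List.length_take, List.Vector.toList_length, Nat.sub_le,
          min_eq_left (Nat.sub_le N τ.length)]⟩)
      (fun u _ => ⟨u.toList ++ τ, by
        simp [List.Vector.toList_length, Nat.sub_add_cancel hτ]⟩)
      (fun w hw => Finset.mem_univ _)
      (fun u hu => by
        refine Finset.mem_filter.mpr ⟨Finset.mem_univ _, ?_⟩
        exact List.suffix_append _ _)
      (fun w hw => ?_) (fun u hu => ?_)
    · simp only [Finset.mem_filter, Finset.mem_univ, true_and] at hw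
      apply Subtype.ext
      have h1 := (List.suffix_iff_eq_append).mp hw
      have h2 : List.take (N - List.length τ) w.toList ++ τ = w.toList := by
        simpa [List.Vector.toList_length] using h1
      exact h2
    · apply Subtype.ext
      obtain ⟨l, hl⟩ := u
      show List.take (N - τ.length) (l ++ τ) = l
      rw [← hl]
      exact List.take_left
  rw [this]
  rw [Finset.card_univ, card_vector, Fintype.card_fin]

private lemma rpow_count_eq (q : ℕ) (hq : 0 < q) (N m n : ℕ) (hmn : m ≤ n) (hn : n ≤ N) :
    ((q ^ (N - n) : ℕ) : ℝ) *
      ((q : ℝ) ^ (-((N : ℝ) - m) / 2) * (q : ℝ) ^ (-((N : ℝ) - n) / 2))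
      = (q : ℝ) ^ (-(((n - m : ℕ) : ℝ)) / 2) := by
  have hq0 : (0 : ℝ) < q := by exact_mod_cast hq
  have hm : m ≤ N := hmn.trans hn
  rw [Nat.cast_pow, ← Real.rpow_natCast (q : ℝ) (N - n), ← Real.rpow_add hq0,
    ← Real.rpow_add hq0]
  congr 1
  rw [Nat.cast_sub hn, Nat.cast_sub hmn]
  ring

open Finset in
/-- For every finite positive Radon measure `μ` on the circle
`𝕋 = ℝ/2πℤ` and every `q ≥ 2`, the branching-Toeplitz kernel
`Γ_q[μ](σ₁,σ₂) = q^{-d(σ₁,σ₂)/2} · μ̂(|σ₁|-|σ₂|) · 1_𝒞(σ₁,σ₂)`, where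
`μ̂(n) = ∫_𝕋 e^{-inθ} dμ(θ)`, is positive definite on `T_q`. -/
theorem btKer_measure_posDef (q : ℕ) (hq : 2 ≤ q)
    (μ : Measure (AddCircle (2 * Real.pi))) [IsFiniteMeasure μ]
    (s : Finset (Vertex q)) (c : Vertex q → ℂ) :
    0 ≤ ∑ σ ∈ s, ∑ τ ∈ s, starRingEnd ℂ (c σ) *
        (if Comp σ τ then
          ((q : ℝ) ^ (-(tdist σ τ : ℝ) / 2) : ℝ) *
            ∫ θ, fourier (-((σ.length : ℤ) - (τ.length : ℤ))) θ ∂μ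
        else 0) * c τ := by
  classical
  haveI : Fact (0 < 2 * Real.pi) := ⟨by positivity⟩
  have hq1 : 0 < q := by omega
  have hq0 : (0 : ℝ) < q := by exact_mod_cast hq1
  set N := s.sup List.length with hN
  have hlen : ∀ σ ∈ s, σ.length ≤ N := fun σ hσ => Finset.le_sup hσ
  set V := List.Vector (Fin q) N with hV
  -- the feature weights
  set r : Vertex q → ℝ := fun σ => (q : ℝ) ^ (-((N : ℝ) - σ.length) / 2) with hr
  set a : Vertex q → V → ℝ :=
    fun σ w => if σ <:+ w.toList then r σ else 0 with ha
  -- integrability of characters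
  have hint : ∀ k : ℤ,
      Integrable (fun θ : AddCircle (2 * Real.pi) => (fourier k : C(AddCircle (2*Real.pi), ℂ)) θ) μ :=
    fun k => (map_continuous (fourier k)).integrable_of_hasCompactSupport
      (HasCompactSupport.of_compactSpace _)
  -- the key combinatorial identity
  have hsum : ∀ σ ∈ s, ∀ τ ∈ s,
      ∑ w : V, a σ w * a τ w
        = if Comp σ τ then (q : ℝ) ^ (-(tdist σ τ : ℝ) / 2) else 0 := by
    intro σ hσ τ hτ
    have h1 : ∀ w : V, a σ w * a τ w
        = if (σ <:+ w.toList ∧ τ <:+ w.toList) then r σ * r τ else 0 := by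
      intro w
      by_cases h1 : σ <:+ w.toList <;> by_cases h2 : τ <:+ w.toList <;>
        simp [ha, h1, h2]
    rw [Finset.sum_congr rfl fun w _ => h1 w, Finset.sum_ite,
      Finset.sum_const, Finset.sum_const_zero, add_zero]
    by_cases hC : Comp σ τ
    · rw [if_pos hC]
      rcases hC with hsub | hsub
      · have hf : Finset.univ.filter
            (fun w : V => σ <:+ w.toList ∧ τ <:+ w.toList)
            = Finset.univ.filter (fun w : V => τ <:+ w.toList) := by
          apply Finset.filter_congr
          intro w _
          exact ⟨fun h => h.2, fun h => ⟨hsub.trans h, h⟩⟩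
        rw [hf, card_suffix_filter q N τ (hlen τ hτ), nsmul_eq_mul]
        rw [tdist_of_suffix_left σ τ hsub]
        simpa [hr] using rpow_count_eq q hq1 N σ.length τ.length
          hsub.length_le (hlen τ hτ)
      · have hf : Finset.univ.filter
            (fun w : V => σ <:+ w.toList ∧ τ <:+ w.toList)
            = Finset.univ.filter (fun w : V => σ <:+ w.toList) := by
          apply Finset.filter_congr
          intro w _
          exact ⟨fun h => h.1, fun h => ⟨h, hsub.trans h⟩⟩
        rw [hf, card_suffix_filter q N σ (hlen σ hσ), nsmul_eq_mul]
        rw [tdist_of_suffix_right σ τ hsub]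
        have := rpow_count_eq q hq1 N τ.length σ.length hsub.length_le (hlen σ hσ)
        rw [mul_comm (r σ) (r τ)]
        simpa [hr] using this
    · rw [if_neg hC]
      have hf : Finset.univ.filter
          (fun w : V => σ <:+ w.toList ∧ τ <:+ w.toList) = ∅ := by
        rw [Finset.filter_eq_empty_iff]
        rintro w _ ⟨h1, h2⟩
        exact hC (List.suffix_or_suffix_of_suffix h1 h2)
      rw [hf]
      simp
  -- the feature expansion
  set F : V → AddCircle (2 * Real.pi) → ℂ :=
    fun w θ => ∑ τ ∈ s, (c τ * (a τ w : ℂ)) * fourier ((τ.length : ℤ)) θ with hF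
  have key : ∀ w : V,
      ∫ θ, (starRingEnd ℂ) (F w θ) * F w θ ∂μ
        = ∑ σ ∈ s, ∑ τ ∈ s,
            ((starRingEnd ℂ) (c σ) * (a σ w : ℂ) * (c τ * (a τ w : ℂ))) *
              ∫ θ, fourier ((τ.length : ℤ) - (σ.length : ℤ)) θ ∂μ := by
    intro w
    have hpt : ∀ θ : AddCircle (2 * Real.pi),
        (starRingEnd ℂ) (F w θ) * F w θ
          = ∑ σ ∈ s, ∑ τ ∈ s,
              ((starRingEnd ℂ) (c σ) * (a σ w : ℂ) * (c τ * (a τ w : ℂ))) *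
                fourier ((τ.length : ℤ) - (σ.length : ℤ)) θ := by
      intro θ
      rw [hF, map_sum, Finset.sum_mul_sum]
      refine Finset.sum_congr rfl fun σ _ => Finset.sum_congr rfl fun τ _ => ?_
      rw [show ((τ.length : ℤ) - (σ.length : ℤ)) = (-(σ.length : ℤ)) + (τ.length : ℤ) by ring,
        fourier_add, fourier_neg]
      simp only [map_mul, Complex.conj_ofReal]
      ring
    calc ∫ θ, (starRingEnd ℂ) (F w θ) * F w θ ∂μ
        = ∫ θ, ∑ σ ∈ s, ∑ τ ∈ s,
            ((starRingEnd ℂ) (c σ) * (a σ w : ℂ) * (c τ * (a τ w : ℂ))) *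
              fourier ((τ.length : ℤ) - (σ.length : ℤ)) θ ∂μ := by
          exact integral_congr_ae (Filter.Eventually.of_forall hpt)
      _ = ∑ σ ∈ s, ∫ θ, ∑ τ ∈ s,
            ((starRingEnd ℂ) (c σ) * (a σ w : ℂ) * (c τ * (a τ w : ℂ))) *
              fourier ((τ.length : ℤ) - (σ.length : ℤ)) θ ∂μ := by
          exact integral_finset_sum s fun σ _ =>
            integrable_finset_sum s fun τ _ => (hint _).const_mul _
      _ = ∑ σ ∈ s, ∑ τ ∈ s, ∫ θ,
            ((starRingEnd ℂ) (c σ) * (a σ w : ℂ) * (c τ * (a τ w : ℂ))) *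
              fourier ((τ.length : ℤ) - (σ.length : ℤ)) θ ∂μ := by
          exact Finset.sum_congr rfl fun σ _ =>
            integral_finset_sum s fun τ _ => (hint _).const_mul _
      _ = _ := by
          exact Finset.sum_congr rfl fun σ _ => Finset.sum_congr rfl fun τ _ =>
            integral_const_mul _ _
  -- main identity
  have hpair : ∀ σ ∈ s, ∀ τ ∈ s,
      (∑ w : V, ((starRingEnd ℂ) (c σ) * (a σ w : ℂ) * (c τ * (a τ w : ℂ))) *
          ∫ θ, fourier ((τ.length : ℤ) - (σ.length : ℤ)) θ ∂μ)
        = starRingEnd ℂ (c σ) *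
            (if Comp σ τ then
              ((q : ℝ) ^ (-(tdist σ τ : ℝ) / 2) : ℝ) *
                ∫ θ, fourier (-((σ.length : ℤ) - (τ.length : ℤ))) θ ∂μ
            else 0) * c τ := by
    intro σ hσ τ hτ
    have hterm : ∀ w : V,
        ((starRingEnd ℂ) (c σ) * (a σ w : ℂ) * (c τ * (a τ w : ℂ))) *
            ∫ θ, fourier ((τ.length : ℤ) - (σ.length : ℤ)) θ ∂μ
        = ((starRingEnd ℂ) (c σ) * c τ *
            ∫ θ, fourier ((τ.length : ℤ) - (σ.length : ℤ)) θ ∂μ) *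
            ((a σ w * a τ w : ℝ) : ℂ) := by
      intro w
      push_cast
      ring
    rw [Finset.sum_congr rfl fun w _ => hterm w]
    rw [← Finset.mul_sum]
    rw [show (∑ w : V, ((a σ w * a τ w : ℝ) : ℂ))
          = ((∑ w : V, a σ w * a τ w : ℝ) : ℂ) from (Complex.ofReal_sum _ _).symm]
    rw [hsum σ hσ τ hτ]
    rw [neg_sub]
    by_cases hC : Comp σ τ
    · rw [if_pos hC, if_pos hC]
      ring
    · rw [if_neg hC, if_neg hC]
      simp
  have main : ∑ σ ∈ s, ∑ τ ∈ s, starRingEnd ℂ (c σ) *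
        (if Comp σ τ then
          ((q : ℝ) ^ (-(tdist σ τ : ℝ) / 2) : ℝ) *
            ∫ θ, fourier (-((σ.length : ℤ) - (τ.length : ℤ))) θ ∂μ
        else 0) * c τ
      = ∑ w : V, ∫ θ, (starRingEnd ℂ) (F w θ) * F w θ ∂μ := by
    refine Eq.symm ?_
    calc ∑ w : V, ∫ θ, (starRingEnd ℂ) (F w θ) * F w θ ∂μ
        = ∑ w : V, ∑ σ ∈ s, ∑ τ ∈ s,
            ((starRingEnd ℂ) (c σ) * (a σ w : ℂ) * (c τ * (a τ w : ℂ))) *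
              ∫ θ, fourier ((τ.length : ℤ) - (σ.length : ℤ)) θ ∂μ :=
          Finset.sum_congr rfl fun w _ => key w
      _ = ∑ σ ∈ s, ∑ w : V, ∑ τ ∈ s,
            ((starRingEnd ℂ) (c σ) * (a σ w : ℂ) * (c τ * (a τ w : ℂ))) *
              ∫ θ, fourier ((τ.length : ℤ) - (σ.length : ℤ)) θ ∂μ :=
          Finset.sum_comm
      _ = ∑ σ ∈ s, ∑ τ ∈ s, ∑ w : V,
            ((starRingEnd ℂ) (c σ) * (a σ w : ℂ) * (c τ * (a τ w : ℂ))) *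
              ∫ θ, fourier ((τ.length : ℤ) - (σ.length : ℤ)) θ ∂μ :=
          Finset.sum_congr rfl fun σ _ => Finset.sum_comm
      _ = ∑ σ ∈ s, ∑ τ ∈ s, starRingEnd ℂ (c σ) *
            (if Comp σ τ then
              ((q : ℝ) ^ (-(tdist σ τ : ℝ) / 2) : ℝ) *
                ∫ θ, fourier (-((σ.length : ℤ) - (τ.length : ℤ))) θ ∂μ
            else 0) * c τ :=
          Finset.sum_congr rfl fun σ hσ => Finset.sum_congr rfl fun τ hτ =>
            hpair σ hσ τ hτ
  rw [main]
  refine Finset.sum_nonneg fun w _ => ?_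
  have hpt : ∀ θ : AddCircle (2 * Real.pi),
      (starRingEnd ℂ) (F w θ) * F w θ = ((Complex.normSq (F w θ) : ℝ) : ℂ) :=
    fun θ => Complex.normSq_eq_conj_mul_self.symm
  rw [integral_congr_ae (Filter.Eventually.of_forall hpt)]
  have hoR : ∫ θ, ((Complex.normSq (F w θ) : ℝ) : ℂ) ∂μ
      = ((∫ θ, Complex.normSq (F w θ) ∂μ : ℝ) : ℂ) := integral_ofReal
  rw [hoR, Complex.zero_le_real]
  exact integral_nonneg fun θ => Complex.normSq_nonneg _
end
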